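/- arXiv:1706.08916 — 5 statements merged into one kernel-verified Lean document; each statement's English description precedes it below -/
import Mathlib

section
/- Let R, r > 0, b ∈ ℂ, and let g be a function from the closed polydisc {|z| ≤ R} × {|t − b| ≤ r} to ℂ that is analytic on the open polydisc {|z| < R} × {|t − b| < r}, continuous on the closed polydisc, satisfies g(0, b) = 0, and is bounded by M > 0 on the closed polydisc. Then for all (z, t) in the closed polydisc, |g(z, t)| ≤ M · max(|z|/R, |t − b|/r). -/
open Complex Metric

theorem schwarz_two_variables
    (R r M : ℝ) (hR : 0 < R) (hr : 0 < r) (hM : 0 < M) (b : ℂ)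
    (g : ℂ × ℂ → ℂ)
    (hg_anal : DifferentiableOn ℂ g (ball (0 : ℂ) R ×ˢ ball b r))
    (hg_cont : ContinuousOn g (closedBall (0 : ℂ) R ×ˢ closedBall b r))
    (hg0 : g (0, b) = 0)
    (hg_bd : ∀ p ∈ closedBall (0 : ℂ) R ×ˢ closedBall b r, ‖g p‖ ≤ M) :
    ∀ z t : ℂ, ‖z‖ ≤ R → ‖t - b‖ ≤ r →
      ‖g (z, t)‖ ≤ M * max (‖z‖ / R) (‖t - b‖ / r) := by
  intro z t hz ht
  set ρ : ℝ := max (‖z‖ / R) (‖t - b‖ / r) with hρdef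
  have hρ0 : 0 ≤ ρ := le_max_of_le_left (by positivity)
  have hρ1 : ρ ≤ 1 := max_le (by rwa [div_le_one hR]) (by rwa [div_le_one hr])
  have hzρ : ‖z‖ ≤ ρ * R := by
    have : ‖z‖ / R ≤ ρ := le_max_left _ _
    calc ‖z‖ = ‖z‖ / R * R := by field_simp
    _ ≤ ρ * R := by nlinarith
  have htρ : ‖t - b‖ ≤ ρ * r := by
    have : ‖t - b‖ / r ≤ ρ := le_max_right _ _
    calc ‖t - b‖ = ‖t - b‖ / r * r := by field_simp
    _ ≤ ρ * r := by nlinarith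
  rcases eq_or_lt_of_le hρ0 with h0 | hpos
  · -- ρ = 0 : z = 0, t = b
    have hz0 : z = 0 := by
      have h : ‖z‖ ≤ 0 := by nlinarith
      exact norm_eq_zero.mp (le_antisymm h (norm_nonneg z))
    have ht0 : t = b := by
      have h : ‖t - b‖ ≤ 0 := by nlinarith
      exact sub_eq_zero.mp (norm_eq_zero.mp (le_antisymm h (norm_nonneg _)))
    rw [hz0, ht0, hg0]
    simp only [norm_zero]
    positivity
  rcases eq_or_lt_of_le hρ1 with h1 | hlt
  · -- ρ = 1
    have := hg_bd (z, t) ⟨mem_closedBall_zero_iff.mpr hz, by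
      simpa [mem_closedBall, dist_eq_norm] using ht⟩
    rw [h1, mul_one]; exact this
  · -- 0 < ρ < 1 : Schwarz lemma on a line
    set a : ℂ := (ρ : ℂ)⁻¹ * z with hadef
    set c : ℂ := (ρ : ℂ)⁻¹ * (t - b) with hcdef
    have hρC : (ρ : ℂ) ≠ 0 := by
      simp [Complex.ofReal_ne_zero]; linarith
    have ha : ‖a‖ ≤ R := by
      rw [hadef, norm_mul, norm_inv, Complex.norm_real, Real.norm_of_nonneg hρ0]
      rw [inv_mul_le_iff₀ hpos]; linarith
    have hc : ‖c‖ ≤ r := by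
      rw [hcdef, norm_mul, norm_inv, Complex.norm_real, Real.norm_of_nonneg hρ0]
      rw [inv_mul_le_iff₀ hpos]; linarith
    set f : ℂ → ℂ := fun w => g (w * a, b + w * c) with hfdef
    have hmaps : ∀ w : ℂ, w ∈ ball (0:ℂ) 1 → (w * a, b + w * c) ∈ ball (0:ℂ) R ×ˢ ball b r := by
      intro w hw
      rw [mem_ball_zero_iff] at hw
      constructor
      · rw [mem_ball_zero_iff, norm_mul]
        calc ‖w‖ * ‖a‖ ≤ ‖w‖ * R := by nlinarith [norm_nonneg w]
        _ < R := by nlinarith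
      · rw [mem_ball, dist_eq_norm]
        simp only [add_sub_cancel_left, norm_mul]
        calc ‖w‖ * ‖c‖ ≤ ‖w‖ * r := by nlinarith [norm_nonneg w]
        _ < r := by nlinarith
    have hfd : DifferentiableOn ℂ f (ball (0:ℂ) 1) := by
      apply hg_anal.comp (t := ball (0:ℂ) R ×ˢ ball b r)
      · exact (DifferentiableOn.prodMk ((differentiable_id.mul_const a).differentiableOn)
          ((differentiable_const b).add (differentiable_id.mul_const c)).differentiableOn)
      · exact hmaps
    have hf0 : f 0 = 0 := by simp [hfdef, hg0]
    have key : ∀ ε : ℝ, 0 < ε → ‖g (z, t)‖ ≤ (M + ε) * ρ := by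
      intro ε hε
      have hmaps2 : Set.MapsTo f (ball (0:ℂ) 1) (ball (f 0) (M + ε)) := by
        intro w hw
        rw [hf0, mem_ball_zero_iff]
        have hmem := hmaps w hw
        have h1 : (w * a, b + w * c) ∈ closedBall (0:ℂ) R ×ˢ closedBall b r :=
          ⟨ball_subset_closedBall hmem.1, ball_subset_closedBall hmem.2⟩
        have := hg_bd _ h1
        calc ‖f w‖ ≤ M := this
        _ < M + ε := by linarith
      have hρball : (ρ : ℂ) ∈ ball (0:ℂ) 1 := by
        rw [mem_ball_zero_iff, Complex.norm_real, Real.norm_of_nonneg hρ0]; exact hlt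
      have := Complex.dist_le_div_mul_dist_of_mapsTo_ball hfd (hmaps2.mono_right ball_subset_closedBall) hρball
      rw [hf0, dist_zero_right, dist_zero_right, Complex.norm_real,
        Real.norm_of_nonneg hρ0, div_one] at this
      have hfρ : f (ρ : ℂ) = g (z, t) := by
        have e1 : (ρ : ℂ) * a = z := by
          rw [hadef, ← mul_assoc, mul_inv_cancel₀ hρC, one_mul]
        have e2 : b + (ρ : ℂ) * c = t := by
          rw [hcdef, ← mul_assoc, mul_inv_cancel₀ hρC, one_mul]; ring
        simp only [hfdef, e1, e2]
      rwa [hfρ] at this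
    -- take ε → 0
    have : ∀ ε : ℝ, 0 < ε → ‖g (z, t)‖ ≤ M * ρ + ε := by
      intro ε hε
      have := key ε hε
      nlinarith
    exact le_of_forall_pos_le_add this
end

section
/- Noshiro–Warschawski theorem: Let D ⊆ ℂ be a convex open set and f : D → ℂ holomorphic. If there exists a real β such that Re(e^{iβ} f'(z)) > 0 for all z ∈ D, then f is injective on D. -/
open Complex

theorem noshiro_warschawski
    (D : Set ℂ) (hD_open : IsOpen D) (hD_convex : Convex ℝ D)
    (f : ℂ → ℂ) (hf : DifferentiableOn ℂ f D)
    (β : ℝ) (hβ : ∀ z ∈ D, 0 < (Complex.exp (β * Complex.I) * deriv f z).re) :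
    Set.InjOn f D := by
  intro z₁ h₁ z₂ h₂ hfe
  by_contra hne
  set w : ℂ := z₂ - z₁ with hw
  have hwne : w ≠ 0 := sub_ne_zero.mpr (fun h => hne h.symm)
  set c : ℂ := Complex.exp (β * Complex.I) / w with hc
  set γ : ℝ → ℂ := fun t => z₁ + (t : ℂ) * w with hγ
  have hmem : ∀ t ∈ Set.Icc (0:ℝ) 1, γ t ∈ D := by
    intro t ht
    have := hD_convex (a := 1 - t) (b := t) h₁ h₂ (by linarith [ht.1, ht.2]) ht.1 (by ring)
    have heq : (1 - t) • z₁ + t • z₂ = γ t := by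
      simp only [hγ, Complex.real_smul]
      push_cast
      ring
    rwa [heq] at this
  have hγderiv : ∀ t : ℝ, HasDerivAt γ w t := by
    intro t
    have h1 : HasDerivAt (fun t : ℝ => (t : ℂ)) 1 t :=
      Complex.ofRealCLM.hasDerivAt
    have h2 := (h1.mul_const w).const_add z₁
    simp only [one_mul] at h2
    exact h2
  set g : ℝ → ℝ := fun t => (c * f (γ t)).re with hg
  have hgderiv : ∀ t ∈ Set.Icc (0:ℝ) 1,
      HasDerivAt g (Complex.exp (β * Complex.I) * deriv f (γ t)).re t := by
    intro t ht
    have hd : DifferentiableAt ℂ f (γ t) :=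
      (hf.differentiableAt (hD_open.mem_nhds (hmem t ht)))
    have hcomp : HasDerivAt (fun t => f (γ t)) (deriv f (γ t) * w) t := by
      have h := hd.hasDerivAt.scomp t (hγderiv t)
      rw [smul_eq_mul, mul_comm] at h
      exact h
    have hmul : HasDerivAt (fun t => c * f (γ t)) (c * (deriv f (γ t) * w)) t :=
      hcomp.const_mul c
    have := Complex.reCLM.hasFDerivAt.comp_hasDerivAt t hmul
    have heq : (Complex.reCLM (c * (deriv f (γ t) * w)))
        = (Complex.exp (β * Complex.I) * deriv f (γ t)).re := by
      have : c * (deriv f (γ t) * w) = Complex.exp (β * Complex.I) * deriv f (γ t) := by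
        rw [hc, mul_comm (deriv f (γ t)) w, ← mul_assoc, div_mul_cancel₀ _ hwne]
      rw [this]; rfl
    rwa [heq] at this
  have hcont : ContinuousOn g (Set.Icc 0 1) := by
    apply ContinuousOn.mono (s := Set.Icc 0 1) ?_ le_rfl
    exact fun t ht => ((hgderiv t ht).continuousAt.continuousWithinAt)
  have hmono : StrictMonoOn g (Set.Icc 0 1) := by
    apply StrictMonoOn.mono (s := Set.Icc 0 1) ?_ le_rfl
    apply strictMonoOn_of_hasDerivWithinAt_pos (convex_Icc 0 1) hcont
    · intro t ht
      have ht' : t ∈ Set.Icc (0:ℝ) 1 := interior_subset ht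
      exact ((hgderiv t ht').hasDerivWithinAt)
    · intro t ht
      have ht' : t ∈ Set.Icc (0:ℝ) 1 := interior_subset ht
      exact hβ _ (hmem t ht')
  have h01 : g 0 < g 1 := hmono (Set.left_mem_Icc.mpr zero_le_one)
      (Set.right_mem_Icc.mpr zero_le_one) zero_lt_one
  have : γ 0 = z₁ := by simp [hγ]
  have h2' : γ 1 = z₂ := by simp [hγ, hw]
  rw [hg] at h01
  simp only [this, h2', hfe] at h01
  exact lt_irrefl _ h01
end

section
/- Let 0 < q < 1 and let h be holomorphic on the open unit disc and continuous on the closed unit disc with h(0) = 0. Define u(z) = (1/Γ(q)) ∫₀ᶻ ζ^{−q} h(ζ) (z−ζ)^{q−1} dζ (integration along the segment from 0 to z). Then for all z in the closed unit disc, |u(z) − z| ≤ sup_{|w| ≤ 1} |Γ(1−q)·h(w) − w/(1−q)|. -/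
open Complex Metric Real

private lemma beta_aux_1 (q : ℝ) (hq0 : 0 < q) (hq1 : q < 1) :
    IntervalIntegrable (fun t : ℝ => (((t ^ (-q) * (1 - t) ^ (q - 1) : ℝ)) : ℂ))
      MeasureTheory.volume 0 1 ∧
    (∫ t in (0:ℝ)..1, (((t ^ (-q) * (1 - t) ^ (q - 1) : ℝ)) : ℂ))
      = ((Real.Gamma (1 - q) * Real.Gamma q : ℝ) : ℂ) := by
  have hq1' : (0:ℝ) < 1 - q := by linarith
  have hu : (0:ℝ) < (((1 - q : ℝ) : ℂ)).re := by simpa using hq1'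
  have hv : (0:ℝ) < (((q : ℝ) : ℂ)).re := by simpa using hq0
  have heq : ∀ t ∈ Set.Ioc (0:ℝ) 1,
      (t:ℂ) ^ (((1 - q : ℝ):ℂ) - 1) * (1 - (t:ℂ)) ^ (((q:ℝ):ℂ) - 1)
        = (((t ^ (-q) * (1 - t) ^ (q - 1) : ℝ)) : ℂ) := by
    intro t ht
    have h1 : ((1 - q : ℝ):ℂ) - 1 = ((-q : ℝ):ℂ) := by push_cast; ring
    have h2 : ((q:ℝ):ℂ) - 1 = ((q - 1 : ℝ):ℂ) := by push_cast; ring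
    have h3 : (1 - (t:ℂ)) = ((1 - t : ℝ):ℂ) := by push_cast; ring
    rw [h1, h2, h3, ← Complex.ofReal_cpow ht.1.le,
      ← Complex.ofReal_cpow (by linarith [ht.2] : (0:ℝ) ≤ 1 - t)]
    push_cast; ring
  have hae : (fun t : ℝ => (t:ℂ) ^ (((1 - q : ℝ):ℂ) - 1) * (1 - (t:ℂ)) ^ (((q:ℝ):ℂ) - 1))
      =ᵐ[MeasureTheory.volume.restrict (Set.uIoc (0:ℝ) 1)]
      (fun t : ℝ => (((t ^ (-q) * (1 - t) ^ (q - 1) : ℝ)) : ℂ)) := by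
    rw [Set.uIoc_of_le (zero_le_one)]
    exact (MeasureTheory.ae_restrict_iff' measurableSet_Ioc).2
      (Filter.Eventually.of_forall heq)
  have hconv := Complex.betaIntegral_convergent hu hv
  constructor
  · exact hconv.congr_ae hae
  · have hval : Complex.betaIntegral ((1 - q : ℝ):ℂ) ((q:ℝ):ℂ)
        = ((Real.Gamma (1 - q) * Real.Gamma q : ℝ) : ℂ) := by
      have := Complex.Gamma_mul_Gamma_eq_betaIntegral hu hv
      have hsum : (((1 - q : ℝ):ℂ)) + ((q:ℝ):ℂ) = 1 := by push_cast; ring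
      rw [hsum, Complex.Gamma_one, one_mul] at this
      rw [← this, Complex.Gamma_ofReal, Complex.Gamma_ofReal]
      push_cast; ring
    rw [← hval, Complex.betaIntegral]
    refine intervalIntegral.integral_congr_ae ?_ |>.symm
    rw [Set.uIoc_of_le (zero_le_one)]
    exact Filter.Eventually.of_forall (fun t ht => (heq t ht))

private lemma beta_aux_2 (q : ℝ) (hq0 : 0 < q) (hq1 : q < 1) :
    IntervalIntegrable (fun t : ℝ => (((t ^ (-q) * (1 - t) ^ (q - 1) : ℝ)) : ℂ) * (t:ℂ))
      MeasureTheory.volume 0 1 ∧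
    (∫ t in (0:ℝ)..1, (((t ^ (-q) * (1 - t) ^ (q - 1) : ℝ)) : ℂ) * (t:ℂ))
      = (((1 - q) * (Real.Gamma (1 - q) * Real.Gamma q) : ℝ) : ℂ) := by
  have hq1' : (0:ℝ) < 1 - q := by linarith
  have hu : (0:ℝ) < (((2 - q : ℝ) : ℂ)).re := by simp; linarith
  have hv : (0:ℝ) < (((q : ℝ) : ℂ)).re := by simpa using hq0
  have heq : ∀ t ∈ Set.Ioc (0:ℝ) 1,
      (t:ℂ) ^ (((2 - q : ℝ):ℂ) - 1) * (1 - (t:ℂ)) ^ (((q:ℝ):ℂ) - 1)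
        = (((t ^ (-q) * (1 - t) ^ (q - 1) : ℝ)) : ℂ) * (t:ℂ) := by
    intro t ht
    have h1 : ((2 - q : ℝ):ℂ) - 1 = ((1 - q : ℝ):ℂ) := by push_cast; ring
    have h2 : ((q:ℝ):ℂ) - 1 = ((q - 1 : ℝ):ℂ) := by push_cast; ring
    have h3 : (1 - (t:ℂ)) = ((1 - t : ℝ):ℂ) := by push_cast; ring
    have h4 : t ^ (1 - q) = t ^ (-q) * t := by
      rw [show (1 - q : ℝ) = -q + 1 by ring, Real.rpow_add ht.1, Real.rpow_one]
    rw [h1, h2, h3, ← Complex.ofReal_cpow ht.1.le,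
      ← Complex.ofReal_cpow (by linarith [ht.2] : (0:ℝ) ≤ 1 - t), h4]
    push_cast; ring
  have hae : (fun t : ℝ => (t:ℂ) ^ (((2 - q : ℝ):ℂ) - 1) * (1 - (t:ℂ)) ^ (((q:ℝ):ℂ) - 1))
      =ᵐ[MeasureTheory.volume.restrict (Set.uIoc (0:ℝ) 1)]
      (fun t : ℝ => (((t ^ (-q) * (1 - t) ^ (q - 1) : ℝ)) : ℂ) * (t:ℂ)) := by
    rw [Set.uIoc_of_le (zero_le_one)]
    exact (MeasureTheory.ae_restrict_iff' measurableSet_Ioc).2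
      (Filter.Eventually.of_forall heq)
  have hconv := Complex.betaIntegral_convergent hu hv
  constructor
  · exact hconv.congr_ae hae
  · have hG2 : Real.Gamma 2 = 1 := by
      rw [show (2:ℝ) = 1 + 1 by norm_num, Real.Gamma_add_one one_ne_zero, Real.Gamma_one]
      ring
    have hG2q : Real.Gamma (2 - q) = (1 - q) * Real.Gamma (1 - q) := by
      rw [show (2 - q : ℝ) = (1 - q) + 1 by ring, Real.Gamma_add_one (ne_of_gt hq1')]
    have hval : Complex.betaIntegral ((2 - q : ℝ):ℂ) ((q:ℝ):ℂ)
        = (((1 - q) * (Real.Gamma (1 - q) * Real.Gamma q) : ℝ) : ℂ) := by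
      have := Complex.Gamma_mul_Gamma_eq_betaIntegral hu hv
      have hsum : (((2 - q : ℝ):ℂ)) + ((q:ℝ):ℂ) = ((2:ℝ):ℂ) := by push_cast; ring
      rw [hsum, Complex.Gamma_ofReal, Complex.Gamma_ofReal, Complex.Gamma_ofReal,
        hG2, hG2q] at this
      rw [Complex.ofReal_one, one_mul] at this
      rw [← this]
      push_cast; ring
    rw [← hval, Complex.betaIntegral]
    refine intervalIntegral.integral_congr_ae ?_ |>.symm
    rw [Set.uIoc_of_le (zero_le_one)]
    exact Filter.Eventually.of_forall (fun t ht => (heq t ht))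

/-- After the change of variable ζ = zt, the segment integral
`u(z) = (1/Γ(q)) ∫₀ᶻ ζ^{-q} h(ζ) (z-ζ)^{q-1} dζ` becomes
`u(z) = (1/Γ(q)) ∫₀¹ t^{-q}(1-t)^{q-1} h(zt) dt`. -/
theorem distance_to_identity_estimate
    (q : ℝ) (hq0 : 0 < q) (hq1 : q < 1)
    (h : ℂ → ℂ)
    (hh_anal : DifferentiableOn ℂ h (ball (0 : ℂ) 1))
    (hh_cont : ContinuousOn h (closedBall (0 : ℂ) 1))
    (hh0 : h 0 = 0)
    (u : ℂ → ℂ)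
    (hu : ∀ z : ℂ, u z =
      (1 / (Real.Gamma q : ℂ)) *
        ∫ t in (0:ℝ)..1, (((t ^ (-q) * (1 - t) ^ (q - 1) : ℝ)) : ℂ) * h (z * t)) :
    ∀ z : ℂ, ‖z‖ ≤ 1 →
      ‖u z - z‖ ≤
        sSup ((fun w : ℂ => ‖(Real.Gamma (1 - q) : ℂ) * h w - w / (1 - q)‖) ''
          closedBall (0 : ℂ) 1) := by
  intro z hz
  have hq1' : (0:ℝ) < 1 - q := by linarith
  have hΓq : 0 < Real.Gamma q := Real.Gamma_pos_of_pos hq0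
  have hΓ1q : 0 < Real.Gamma (1 - q) := Real.Gamma_pos_of_pos hq1'
  obtain ⟨hconv1, hval1⟩ := beta_aux_1 q hq0 hq1
  obtain ⟨hconv2, hval2⟩ := beta_aux_2 q hq0 hq1
  set M : ℝ := sSup ((fun w : ℂ => ‖(Real.Gamma (1 - q) : ℂ) * h w - w / (1 - q)‖) ''
      closedBall (0 : ℂ) 1) with hM
  -- membership of z*t in the closed ball
  have hmem : ∀ t : ℝ, t ∈ Set.Icc (0:ℝ) 1 → z * (t:ℂ) ∈ closedBall (0 : ℂ) 1 := by
    intro t ht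
    rw [mem_closedBall, dist_zero_right, norm_mul, Complex.norm_real,
      Real.norm_eq_abs, _root_.abs_of_nonneg ht.1]
    calc ‖z‖ * t ≤ 1 * 1 := mul_le_mul hz ht.2 ht.1 zero_le_one
    _ = 1 := by ring
  -- bound function is bounded above on the compact ball
  have hfc : ContinuousOn (fun w : ℂ => ‖(Real.Gamma (1 - q) : ℂ) * h w - w / (1 - q)‖)
      (closedBall (0 : ℂ) 1) := by
    exact ((continuousOn_const.mul hh_cont).sub
      ((continuousOn_id.div_const _))).norm
  have hbdd : BddAbove ((fun w : ℂ => ‖(Real.Gamma (1 - q) : ℂ) * h w - w / (1 - q)‖) ''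
      closedBall (0 : ℂ) 1) :=
    ((isCompact_closedBall _ _).image_of_continuousOn hfc).bddAbove
  have hle : ∀ w ∈ closedBall (0 : ℂ) 1,
      ‖(Real.Gamma (1 - q) : ℂ) * h w - w / (1 - q)‖ ≤ M :=
    fun w hw => le_csSup hbdd ⟨w, hw, rfl⟩
  -- continuity of t ↦ h (z * t)
  have hcont : ContinuousOn (fun t : ℝ => h (z * (t:ℂ))) (Set.uIcc (0:ℝ) 1) := by
    rw [Set.uIcc_of_le zero_le_one]
    exact hh_cont.comp ((continuous_const.mul Complex.continuous_ofReal).continuousOn) hmem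
  -- integrability of the main pieces
  have hintA : IntervalIntegrable
      (fun t : ℝ => (((t ^ (-q) * (1 - t) ^ (q - 1) : ℝ)) : ℂ) * h (z * t))
      MeasureTheory.volume 0 1 := hconv1.mul_continuousOn hcont
  -- key identity
  have hne1 : ((Real.Gamma q : ℝ):ℂ) ≠ 0 := by
    simpa using ne_of_gt hΓq
  have hne2 : ((Real.Gamma (1 - q) : ℝ):ℂ) ≠ 0 := by
    simpa using ne_of_gt hΓ1q
  have hne3 : (1 - (q:ℂ)) ≠ 0 := by
    rw [show (1 - (q:ℂ)) = ((1 - q : ℝ):ℂ) by push_cast; ring]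
    exact Complex.ofReal_ne_zero.mpr (ne_of_gt hq1')
  have hsplit : (∫ t in (0:ℝ)..1, (((t ^ (-q) * (1 - t) ^ (q - 1) : ℝ)) : ℂ) *
        ((Real.Gamma (1 - q) : ℂ) * h (z * t) - (z * t) / (1 - q)))
      = (Real.Gamma (1 - q) : ℂ) *
          (∫ t in (0:ℝ)..1, (((t ^ (-q) * (1 - t) ^ (q - 1) : ℝ)) : ℂ) * h (z * t))
        - (z / (1 - (q:ℂ))) *
          (∫ t in (0:ℝ)..1, (((t ^ (-q) * (1 - t) ^ (q - 1) : ℝ)) : ℂ) * (t:ℂ)) := by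
    have e1 : ∀ t : ℝ, (((t ^ (-q) * (1 - t) ^ (q - 1) : ℝ)) : ℂ) *
        ((Real.Gamma (1 - q) : ℂ) * h (z * t) - (z * t) / (1 - q))
        = (Real.Gamma (1 - q) : ℂ) * ((((t ^ (-q) * (1 - t) ^ (q - 1) : ℝ)) : ℂ) * h (z * t))
          - (z / (1 - (q:ℂ))) * ((((t ^ (-q) * (1 - t) ^ (q - 1) : ℝ)) : ℂ) * (t:ℂ)) := by
      intro t; field_simp
    simp_rw [e1]
    rw [intervalIntegral.integral_sub (hintA.const_mul _) (hconv2.const_mul _),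
      intervalIntegral.integral_const_mul, intervalIntegral.integral_const_mul]
  have key : u z - z = (1 / ((Real.Gamma q * Real.Gamma (1 - q) : ℝ):ℂ)) *
      ∫ t in (0:ℝ)..1, (((t ^ (-q) * (1 - t) ^ (q - 1) : ℝ)) : ℂ) *
        ((Real.Gamma (1 - q) : ℂ) * h (z * t) - (z * t) / (1 - q)) := by
    rw [hu z, hsplit, hval2]
    push_cast
    field_simp
  -- real-valued weight facts
  have hWpos : ∀ t ∈ Set.Ioc (0:ℝ) 1, 0 ≤ t ^ (-q) * (1 - t) ^ (q - 1) := fun t ht =>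
    mul_nonneg (Real.rpow_nonneg ht.1.le _) (Real.rpow_nonneg (by linarith [ht.2]) _)
  have hconv1R : IntervalIntegrable (fun t : ℝ => t ^ (-q) * (1 - t) ^ (q - 1))
      MeasureTheory.volume 0 1 := by
    apply hconv1.norm.congr_ae
    rw [Set.uIoc_of_le (zero_le_one)]
    refine (MeasureTheory.ae_restrict_iff' measurableSet_Ioc).2
      (Filter.Eventually.of_forall ?_)
    intro t ht
    show ‖((t ^ (-q) * (1 - t) ^ (q - 1) : ℝ) : ℂ)‖ = t ^ (-q) * (1 - t) ^ (q - 1)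
    rw [Complex.norm_real, Real.norm_eq_abs, _root_.abs_of_nonneg (hWpos t ht)]
  have hval1R : (∫ t in (0:ℝ)..1, t ^ (-q) * (1 - t) ^ (q - 1))
      = Real.Gamma (1 - q) * Real.Gamma q := by
    have := hval1
    rw [intervalIntegral.integral_ofReal] at this
    exact_mod_cast this
  have hM0 : 0 ≤ M := by
    refine le_trans (norm_nonneg ((Real.Gamma (1 - q) : ℂ) * h 0 - 0 / (1 - q))) ?_
    exact hle 0 (mem_closedBall_self zero_le_one)
  rw [key]
  -- bound the integral
  have hb : ‖∫ t in (0:ℝ)..1, (((t ^ (-q) * (1 - t) ^ (q - 1) : ℝ)) : ℂ) *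
        ((Real.Gamma (1 - q) : ℂ) * h (z * t) - (z * t) / (1 - q))‖
      ≤ |∫ t in (0:ℝ)..1, (t ^ (-q) * (1 - t) ^ (q - 1)) * M| := by
    apply intervalIntegral.norm_integral_le_abs_of_norm_le
    · rw [Set.uIoc_of_le (zero_le_one)]
      refine (MeasureTheory.ae_restrict_iff' measurableSet_Ioc).2
        (Filter.Eventually.of_forall ?_)
      intro t ht
      rw [norm_mul, Complex.norm_real, Real.norm_eq_abs,
        _root_.abs_of_nonneg (hWpos t ht)]
      exact mul_le_mul_of_nonneg_left (hle _ (hmem t ⟨ht.1.le, ht.2⟩)) (hWpos t ht)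
    · exact hconv1R.mul_const M
  have habs : |∫ t in (0:ℝ)..1, (t ^ (-q) * (1 - t) ^ (q - 1)) * M|
      = Real.Gamma (1 - q) * Real.Gamma q * M := by
    rw [intervalIntegral.integral_mul_const, hval1R,
      _root_.abs_of_nonneg (mul_nonneg (mul_nonneg hΓ1q.le hΓq.le) hM0)]
  have hc : ‖(1 / ((Real.Gamma q * Real.Gamma (1 - q) : ℝ):ℂ))‖
      = 1 / (Real.Gamma q * Real.Gamma (1 - q)) := by
    rw [norm_div, norm_one, Complex.norm_real, Real.norm_eq_abs,
      _root_.abs_of_pos (mul_pos hΓq hΓ1q)]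
  rw [norm_mul, hc]
  calc (1 / (Real.Gamma q * Real.Gamma (1 - q))) *
        ‖∫ t in (0:ℝ)..1, (((t ^ (-q) * (1 - t) ^ (q - 1) : ℝ)) : ℂ) *
          ((Real.Gamma (1 - q) : ℂ) * h (z * t) - (z * t) / (1 - q))‖
      ≤ (1 / (Real.Gamma q * Real.Gamma (1 - q))) *
          (Real.Gamma (1 - q) * Real.Gamma q * M) := by
        refine mul_le_mul_of_nonneg_left (hb.trans (le_of_eq habs)) ?_
        positivity
    _ = M := by field_simp
end

section
/- Let u be holomorphic on the open unit disc with u(0) = 0, u'(0) = 1, and |u'(z) − 1| ≤ M for all z in the open unit disc, where 0 < M ≤ √20/5 = 2/√5. Then u is starlike with respect to the origin on the open unit disc, i.e., Re(z u'(z)/u(z)) > 0 for all z ≠ 0 in the open unit disc. -/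
open Complex Metric

lemma mocanu_real_ineq (s x y L : ℝ) (hs : 0 ≤ s) (hs5 : 5 * s^2 < 1)
    (hb : x^2 + y^2 ≤ s^2) (hL0 : 0 ≤ L) (hL : L^2 = (1+x)^2 + y^2) :
    2 * s * L < 1 + x := by
  have hx : -s ≤ x := by nlinarith [sq_nonneg y, sq_nonneg (x + s)]
  have hs1 : s < 1 := by nlinarith
  have hx1 : 0 < 1 + x := by linarith
  have key : 4 * s^2 * L^2 < (1 + x)^2 := by
    rcases eq_or_lt_of_le hs with h0 | h0
    · nlinarith
    · nlinarith [sq_nonneg (x + 1 - 4*s^2),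
        mul_pos (mul_pos h0 h0) (by nlinarith : (0:ℝ) < 1 - 5*s^2)]
  nlinarith [mul_nonneg (mul_nonneg hs hL0) hx1.le, sq_nonneg (1 + x - 2*s*L)]

lemma mocanu_complex (a b : ℂ) (s : ℝ) (hs : 0 ≤ s) (hs5 : 5 * s^2 < 1)
    (ha : ‖a‖ ≤ 2 * s) (hb : ‖b‖ ≤ s) : 0 < ((1 + a) / (1 + b)).re := by
  set x := b.re
  set y := b.im
  set L := ‖1 + b‖ with hLdef
  have hL0 : 0 ≤ L := norm_nonneg _
  have hL : L^2 = (1+x)^2 + y^2 := by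
    rw [hLdef, Complex.sq_norm]
    simp [Complex.normSq_apply, x, y]
    ring
  have hbxy : x^2 + y^2 ≤ s^2 := by
    have h2 : ‖b‖^2 ≤ s^2 := by nlinarith [norm_nonneg b]
    rw [Complex.sq_norm, Complex.normSq_apply] at h2
    nlinarith [h2]
  have hkey : 2 * s * L < 1 + x := mocanu_real_ineq s x y L hs hs5 hbxy hL0 hL
  have hbne : (1 : ℂ) + b ≠ 0 := by
    intro h
    rw [h, norm_zero] at hLdef
    simp [hLdef] at hkey
    nlinarith [norm_nonneg b]
  have hre : ((1 + a) / (1 + b)).re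
      = ((1 + a) * (starRingEnd ℂ) (1 + b)).re / Complex.normSq (1 + b) := by
    rw [Complex.div_re, Complex.mul_re]
    simp [Complex.normSq_apply, Complex.conj_re, Complex.conj_im]
    ring
  rw [hre]
  apply div_pos
  · have h1 : ((1 + a) * (starRingEnd ℂ) (1 + b)).re
        = (1 + x) + (a * (starRingEnd ℂ) (1 + b)).re := by
      rw [add_mul, one_mul, Complex.add_re]
      simp [x]
    rw [h1]
    have h2 : -(‖a * (starRingEnd ℂ) (1 + b)‖) ≤ (a * (starRingEnd ℂ) (1 + b)).re :=
      neg_le_of_abs_le (Complex.abs_re_le_norm _)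
    have h3 : ‖a * (starRingEnd ℂ) (1 + b)‖ ≤ 2 * s * L := by
      rw [norm_mul, RCLike.norm_conj]
      exact mul_le_mul ha le_rfl (norm_nonneg _) (by linarith)
    linarith
  · exact Complex.normSq_pos.2 hbne

lemma mocanu_ftc (u : ℂ → ℂ) (hu_anal : DifferentiableOn ℂ u (ball (0 : ℂ) 1))
    (c d : ℂ) (hc : c ∈ ball (0 : ℂ) 1) (hd : d ∈ ball (0 : ℂ) 1) :
    u d - u c = ∫ t in (0:ℝ)..1, (d - c) * deriv u (c + (t : ℂ) * (d - c)) := by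
  have hball : ∀ t : ℝ, t ∈ Set.uIcc (0:ℝ) 1 → c + (t : ℂ) * (d - c) ∈ ball (0 : ℂ) 1 := by
    intro t ht
    rw [Set.uIcc_of_le (by norm_num : (0:ℝ) ≤ 1)] at ht
    have := (convex_ball (0:ℂ) 1).add_smul_sub_mem hc hd ht
    simpa [Complex.real_smul] using this
  have hderiv : ∀ t ∈ Set.uIcc (0:ℝ) 1,
      HasDerivAt (fun t : ℝ => u (c + (t : ℂ) * (d - c)))
        ((d - c) * deriv u (c + (t : ℂ) * (d - c))) t := by
    intro t ht
    have hmem := hball t ht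
    have hu : HasDerivAt u (deriv u (c + (t : ℂ) * (d - c))) (c + (t : ℂ) * (d - c)) :=
      (hu_anal.differentiableAt (isOpen_ball.mem_nhds hmem)).hasDerivAt
    have hpath : HasDerivAt (fun w : ℂ => u (c + w * (d - c)))
        (deriv u (c + (t : ℂ) * (d - c)) * (d - c)) (t : ℂ) := by
      have h1 : HasDerivAt (fun w : ℂ => c + w * (d - c)) (d - c) (t : ℂ) := by
        simpa using ((hasDerivAt_id ((t : ℂ))).mul_const (d - c)).const_add c
      exact hu.comp (t : ℂ) h1
    have := hpath.comp_ofReal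
    simpa [mul_comm] using this
  have hcont : ContinuousOn (fun t : ℝ => (d - c) * deriv u (c + (t : ℂ) * (d - c)))
      (Set.uIcc (0:ℝ) 1) := by
    have hdc : DifferentiableOn ℂ (deriv u) (ball (0 : ℂ) 1) :=
      ((hu_anal.analyticOnNhd isOpen_ball).deriv).differentiableOn
    apply ContinuousOn.mul continuousOn_const
    apply hdc.continuousOn.comp _ hball
    fun_prop
  rw [intervalIntegral.integral_eq_sub_of_hasDerivAt hderiv
    (hcont.intervalIntegrable_of_Icc (by norm_num) |>.mono_set (by simp))]
  · simp

lemma mocanu_schwarz (u : ℂ → ℂ) (M : ℝ)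
    (hu_anal : DifferentiableOn ℂ u (ball (0 : ℂ) 1))
    (hu'0 : deriv u 0 = 1)
    (hu_bd : ∀ z ∈ ball (0 : ℂ) 1, ‖deriv u z - 1‖ ≤ M) :
    ∀ z ∈ ball (0 : ℂ) 1, ‖deriv u z - 1‖ ≤ M * ‖z‖ := by
  intro z hz
  set a : ℂ → ℂ := fun w => deriv u w - 1 with ha
  have hd : DifferentiableOn ℂ a (ball (0 : ℂ) 1) :=
    (((hu_anal.analyticOnNhd isOpen_ball).deriv).differentiableOn).sub (differentiableOn_const 1)
  have ha0 : a 0 = 0 := by simp [ha, hu'0]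
  apply le_of_forall_pos_le_add
  intro ε hε
  have hmaps : Set.MapsTo a (ball (0 : ℂ) 1) (ball (a 0) (M + ε)) := by
    intro w hw
    rw [ha0, mem_ball, dist_zero_right]
    exact lt_of_le_of_lt (hu_bd w hw) (by linarith)
  have := Complex.dist_le_div_mul_dist_of_mapsTo_ball hd (hmaps.mono_right ball_subset_closedBall) hz
  rw [ha0, dist_eq_norm, sub_zero, dist_zero_right, div_one] at this
  have hz1 : ‖z‖ < 1 := by simpa [mem_ball, dist_zero_right] using hz
  nlinarith [norm_nonneg z, norm_nonneg (a z)]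

/-- Mocanu's starlikeness criterion. -/
theorem mocanu_starlike
    (u : ℂ → ℂ) (M : ℝ) (hM0 : 0 < M) (hM : M ≤ 2 / Real.sqrt 5)
    (hu_anal : DifferentiableOn ℂ u (ball (0 : ℂ) 1))
    (hu0 : u 0 = 0) (hu'0 : deriv u 0 = 1)
    (hu_bd : ∀ z ∈ ball (0 : ℂ) 1, ‖deriv u z - 1‖ ≤ M) :
    Set.InjOn u (ball (0 : ℂ) 1) ∧
    ∀ z ∈ ball (0 : ℂ) 1, z ≠ 0 → 0 < (z * deriv u z / u z).re := by
  have hsq : Real.sqrt 5 ^ 2 = 5 := Real.sq_sqrt (by norm_num)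
  have hpos : (0:ℝ) < Real.sqrt 5 := Real.sqrt_pos.2 (by norm_num)
  have h25 : (2:ℝ) < Real.sqrt 5 := by nlinarith
  have hM1 : M < 1 := lt_of_le_of_lt hM ((div_lt_one hpos).2 h25)
  have hM45 : M ^ 2 ≤ 4 / 5 := by
    have h1 : M * Real.sqrt 5 ≤ 2 := (le_div_iff₀ hpos).1 hM
    nlinarith
  -- Schwarz-type bound
  have hSch : ∀ z ∈ ball (0 : ℂ) 1, ‖deriv u z - 1‖ ≤ M * ‖z‖ :=
    mocanu_schwarz u M hu_anal hu'0 hu_bd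
  -- the auxiliary function v w = u w - w
  set v : ℂ → ℂ := fun w => u w - w with hv
  have hv_anal : DifferentiableOn ℂ v (ball (0 : ℂ) 1) :=
    hu_anal.sub differentiable_id.differentiableOn
  have hvd : ∀ w ∈ ball (0 : ℂ) 1, deriv v w = deriv u w - 1 := by
    intro w hw
    have h1 : DifferentiableAt ℂ u w := hu_anal.differentiableAt (isOpen_ball.mem_nhds hw)
    rw [hv, deriv_fun_sub h1 differentiableAt_fun_id, deriv_id'']
  constructor
  · -- injectivity
    intro c hc d hd heq
    by_contra hne
    have hcd : d - c ≠ 0 := sub_ne_zero.2 (Ne.symm hne)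
    set r : ℝ := max ‖c‖ ‖d‖ with hr
    have hr1 : r < 1 := by
      rw [hr]
      apply max_lt <;> simpa [mem_ball, dist_zero_right] using (by assumption : _ ∈ ball (0:ℂ) 1)
    have hr0 : 0 ≤ r := le_trans (norm_nonneg c) (le_max_left _ _)
    have hftc := mocanu_ftc v hv_anal c d hc hd
    have hvdc : v d - v c = u d - u c - (d - c) := by rw [hv]; ring
    have hbd : ‖v d - v c‖ ≤ ‖d - c‖ * (M * r) * |1 - 0| := by
      rw [hftc]
      apply intervalIntegral.norm_integral_le_of_norm_le_const
      intro t ht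
      rw [Set.uIoc_of_le (by norm_num : (0:ℝ) ≤ 1)] at ht
      have ht' : t ∈ Set.uIcc (0:ℝ) 1 := by
        rw [Set.uIcc_of_le (by norm_num : (0:ℝ) ≤ 1)]
        exact ⟨ht.1.le, ht.2⟩
      have hmem : c + (t : ℂ) * (d - c) ∈ ball (0 : ℂ) 1 := by
        rw [Set.uIcc_of_le (by norm_num : (0:ℝ) ≤ 1)] at ht'
        have := (convex_ball (0:ℂ) 1).add_smul_sub_mem hc hd ht'
        simpa [Complex.real_smul] using this
      have hnp : ‖c + (t : ℂ) * (d - c)‖ ≤ r := by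
        have heq2 : c + (t : ℂ) * (d - c) = (1 - (t:ℂ)) * c + (t : ℂ) * d := by ring
        rw [heq2]
        calc ‖(1 - (t:ℂ)) * c + (t : ℂ) * d‖ ≤ ‖(1 - (t:ℂ)) * c‖ + ‖(t : ℂ) * d‖ :=
              norm_add_le _ _
          _ = (1 - t) * ‖c‖ + t * ‖d‖ := by
              rw [norm_mul, norm_mul]
              have h1 : ‖(1 - (t:ℂ))‖ = 1 - t := by
                rw [show (1 : ℂ) - (t:ℂ) = ((1 - t : ℝ) : ℂ) by push_cast; ring,
                  Complex.norm_real, Real.norm_of_nonneg (by linarith [ht.2])]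
              have h2 : ‖(t:ℂ)‖ = t := by
                rw [Complex.norm_real, Real.norm_of_nonneg ht.1.le]
              rw [h1, h2]
          _ ≤ (1 - t) * r + t * r := by
              have h1 : ‖c‖ ≤ r := le_max_left _ _
              have h2 : ‖d‖ ≤ r := le_max_right _ _
              have h3 : 0 ≤ 1 - t := by linarith [ht.2]
              nlinarith [ht.1.le]
          _ = r := by ring
      rw [norm_mul, hvd _ hmem]
      have := hSch _ hmem
      calc ‖d - c‖ * ‖deriv u (c + (t:ℂ) * (d - c)) - 1‖
          ≤ ‖d - c‖ * (M * r) := by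
            apply mul_le_mul_of_nonneg_left _ (norm_nonneg _)
            exact this.trans (by nlinarith)
        _ = ‖d - c‖ * (M * r) := rfl
    rw [hvdc, heq, show u d - u d - (d - c) = -(d - c) from by ring, norm_neg] at hbd
    have hdcpos : 0 < ‖d - c‖ := norm_pos_iff.2 hcd
    have hMr : M * r < 1 := by nlinarith
    rw [show |(1:ℝ) - 0| = 1 from by norm_num] at hbd
    nlinarith
  · -- starlikeness
    intro z hz hz0
    have hz1 : ‖z‖ < 1 := by simpa [mem_ball, dist_zero_right] using hz
    have hzpos : 0 < ‖z‖ := norm_pos_iff.2 hz0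
    set s : ℝ := M * ‖z‖ / 2 with hs
    have hs0 : 0 ≤ s := by positivity
    have hs5 : 5 * s ^ 2 < 1 := by
      have hz2 : ‖z‖ ^ 2 < 1 := by nlinarith
      have h := mul_le_mul_of_nonneg_right hM45 (sq_nonneg ‖z‖)
      rw [hs]
      nlinarith
    -- bound on u z / z - 1
    have hftc := mocanu_ftc v hv_anal 0 z (mem_ball_self (by norm_num)) hz
    simp only [zero_add, sub_zero] at hftc
    have hv0 : v 0 = 0 := by simp [hv, hu0]
    have huzz : ‖u z - z‖ ≤ M * ‖z‖ ^ 2 / 2 := by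
      have h1 : u z - z = ∫ t in (0:ℝ)..1, z * deriv v ((t:ℂ) * z) := by
        rw [← hftc, hv0, hv]; ring
      rw [h1]
      have hbd2 : ‖∫ t in (0:ℝ)..1, z * deriv v ((t:ℂ) * z)‖
          ≤ |∫ t in (0:ℝ)..1, M * ‖z‖^2 * t| := by
        apply intervalIntegral.norm_integral_le_abs_of_norm_le
        · rw [MeasureTheory.ae_restrict_iff' measurableSet_uIoc]
          apply MeasureTheory.ae_of_all
          intro t ht
          rw [Set.uIoc_of_le (by norm_num : (0:ℝ) ≤ 1)] at ht
          have hnorm : ‖(t:ℂ) * z‖ = t * ‖z‖ := by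
            rw [norm_mul, Complex.norm_real, Real.norm_of_nonneg ht.1.le]
          have hmem : (t : ℂ) * z ∈ ball (0 : ℂ) 1 := by
            rw [mem_ball, dist_zero_right, hnorm]
            nlinarith [ht.2]
          rw [norm_mul, hvd _ hmem]
          have := hSch _ hmem
          rw [hnorm] at this
          calc ‖z‖ * ‖deriv u ((t:ℂ) * z) - 1‖
              ≤ ‖z‖ * (M * (t * ‖z‖)) :=
                mul_le_mul_of_nonneg_left this (norm_nonneg _)
            _ = M * ‖z‖^2 * t := by ring
        · apply Continuous.intervalIntegrable
          continuity
      have hval : (∫ t in (0:ℝ)..1, M * ‖z‖^2 * t) = M * ‖z‖^2 / 2 := by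
        rw [intervalIntegral.integral_const_mul, integral_id]
        ring
      rw [hval, _root_.abs_of_nonneg (by positivity)] at hbd2
      exact hbd2
    -- set up a and b
    set a : ℂ := deriv u z - 1 with ha
    set b : ℂ := u z / z - 1 with hb
    have hbnorm : ‖b‖ ≤ s := by
      rw [hb, hs]
      have : u z / z - 1 = (u z - z) / z := by field_simp
      rw [this, norm_div]
      rw [div_le_div_iff₀ hzpos (by norm_num : (0:ℝ) < 2)] at *
      calc ‖u z - z‖ * 2 ≤ (M * ‖z‖^2 / 2) * 2 := by linarith
        _ = M * ‖z‖ * ‖z‖ := by ring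
    have hanorm : ‖a‖ ≤ 2 * s := by
      rw [ha, hs]
      have := hSch z hz
      linarith
    have hratio : z * deriv u z / u z = (1 + a) / (1 + b) := by
      rw [ha, hb]
      have h1 : (1 : ℂ) + (u z / z - 1) = u z / z := by ring
      have h2 : (1 : ℂ) + (deriv u z - 1) = deriv u z := by ring
      rw [h1, h2, div_div_eq_mul_div, mul_comm]
    rw [hratio]
    exact mocanu_complex a b s hs0 hs5 hanorm hbnorm
end

section
/- Let 0 < q < 1, R > 0, b ∈ ℂ, and let u : ℂ → ℂ be continuous on the closed disc {|z| ≤ R} with u(0) = b, and suppose F : ℂ → ℂ is continuous on the closed disc with F(0) = b/Γ(1−q) and |F(ζ) − b/Γ(1−q)| ≤ M·|ζ|/R for all |ζ| ≤ R. Define Tu(z) = (1/Γ(q)) ∫₀ᶻ ζ^{−q} F(ζ) (z−ζ)^{q−1} dζ (segment integral). Then |Tu(z) − b| ≤ M·Γ(2−q)·|z|/R for all z in the closed disc of radius R. -/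
open Complex Metric Real

open MeasureTheory intervalIntegral

lemma beta_ofReal {a b : ℝ} (ha : 0 < a) (hb : 0 < b) :
    Complex.betaIntegral a b =
      ((∫ t in (0:ℝ)..1, t ^ (a-1) * (1-t) ^ (b-1) : ℝ) : ℂ) := by
  rw [Complex.betaIntegral, ← intervalIntegral.integral_ofReal]
  apply intervalIntegral.integral_congr
  intro t ht
  rw [Set.uIcc_of_le (by norm_num : (0:ℝ) ≤ 1)] at ht
  obtain ⟨h0, h1⟩ := ht
  push_cast
  rw [Complex.ofReal_cpow h0, Complex.ofReal_cpow (by linarith : (0:ℝ) ≤ 1 - t)]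
  push_cast
  ring

lemma beta_real {a b : ℝ} (ha : 0 < a) (hb : 0 < b) :
    ∫ t in (0:ℝ)..1, t ^ (a-1) * (1-t) ^ (b-1) =
      Real.Gamma a * Real.Gamma b / Real.Gamma (a+b) := by
  have h2 := Complex.Gamma_mul_Gamma_eq_betaIntegral (s := (a:ℂ)) (t := (b:ℂ))
    (by simpa using ha) (by simpa using hb)
  rw [beta_ofReal ha hb, ← Complex.ofReal_add, Complex.Gamma_ofReal, Complex.Gamma_ofReal,
    Complex.Gamma_ofReal, ← Complex.ofReal_mul, ← Complex.ofReal_mul] at h2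
  have h3 : Real.Gamma a * Real.Gamma b =
      Real.Gamma (a+b) * ∫ t in (0:ℝ)..1, t ^ (a-1) * (1-t) ^ (b-1) :=
    Complex.ofReal_inj.mp h2
  have hΓ : 0 < Real.Gamma (a+b) := Real.Gamma_pos_of_pos (by linarith)
  field_simp [h3]
  rw [h3]; ring

lemma beta_integrableC {a b : ℝ} (ha : 0 < a) (hb : 0 < b) :
    IntervalIntegrable (fun t : ℝ => ((t ^ (a-1) * (1-t) ^ (b-1) : ℝ) : ℂ)) volume 0 1 := by
  have h := Complex.betaIntegral_convergent (u := (a:ℂ)) (v := (b:ℂ))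
    (by simpa using ha) (by simpa using hb)
  apply h.congr_ae
  rw [Filter.EventuallyEq, ae_restrict_iff' measurableSet_uIoc]
  filter_upwards with t ht
  rw [Set.uIoc_of_le (by norm_num : (0:ℝ) ≤ 1)] at ht
  obtain ⟨h0, h1⟩ := ht
  push_cast
  rw [Complex.ofReal_cpow h0.le, Complex.ofReal_cpow (by linarith : (0:ℝ) ≤ 1 - t)]
  push_cast
  ring

lemma beta_integrable {a b : ℝ} (ha : 0 < a) (hb : 0 < b) :
    IntervalIntegrable (fun t : ℝ => t ^ (a-1) * (1-t) ^ (b-1)) volume 0 1 := by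
  have h3 := (beta_integrableC ha hb).norm
  apply h3.congr_ae
  rw [Filter.EventuallyEq, ae_restrict_iff' measurableSet_uIoc]
  filter_upwards with t ht
  rw [Set.uIoc_of_le (by norm_num : (0:ℝ) ≤ 1)] at ht
  obtain ⟨h0, h1⟩ := ht
  simp only [Complex.norm_real, Real.norm_eq_abs]
  exact _root_.abs_of_nonneg (mul_nonneg (Real.rpow_nonneg h0.le _)
    (Real.rpow_nonneg (by linarith) _))

/-- The bound `|Tu(z) - b| ≤ M Γ(2-q) |z| / R`, with the operator written after
the change of variable ζ = zt, so that
`Tu(z) = (1/Γ(q)) ∫₀¹ t^{-q}(1-t)^{q-1} F(zt) dt` where `F(ζ) = ζ^q f(ζ, u(ζ))`. -/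
theorem operator_estimate
    (q R M : ℝ) (hq0 : 0 < q) (hq1 : q < 1) (hR : 0 < R) (b : ℂ)
    (u : ℂ → ℂ)
    (hu_cont : ContinuousOn u (closedBall (0 : ℂ) R))
    (hu0 : u 0 = b)
    (F : ℂ → ℂ)
    (hF_cont : ContinuousOn F (closedBall (0 : ℂ) R))
    (hF0 : F 0 = b / (Real.Gamma (1 - q) : ℂ))
    (hF_bd : ∀ ζ : ℂ, ‖ζ‖ ≤ R → ‖F ζ - b / (Real.Gamma (1 - q) : ℂ)‖ ≤ M * ‖ζ‖ / R)
    (Tu : ℂ → ℂ)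
    (hTu : ∀ z : ℂ, Tu z =
      (1 / (Real.Gamma q : ℂ)) *
        ∫ t in (0:ℝ)..1, (((t ^ (-q) * (1 - t) ^ (q - 1) : ℝ)) : ℂ) * F (z * t)) :
    ∀ z : ℂ, ‖z‖ ≤ R → ‖Tu z - b‖ ≤ M * Real.Gamma (2 - q) * ‖z‖ / R := by
  intro z hz
  set c : ℂ := b / (Real.Gamma (1 - q) : ℂ) with hc
  have hΓq : 0 < Real.Gamma q := Real.Gamma_pos_of_pos hq0
  have hΓ1q : 0 < Real.Gamma (1 - q) := Real.Gamma_pos_of_pos (by linarith)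
  have hΓ2q : 0 < Real.Gamma (2 - q) := Real.Gamma_pos_of_pos (by linarith)
  have hM : 0 ≤ M := by
    have h1 := hF_bd (R : ℂ) (by rw [Complex.norm_real, Real.norm_eq_abs, abs_of_pos hR])
    rw [Complex.norm_real, Real.norm_eq_abs, abs_of_pos hR] at h1
    have h2 : (0:ℝ) ≤ ‖F R - c‖ := norm_nonneg _
    have h3 : M * R / R = M := by field_simp
    rw [h3] at h1
    linarith
  -- integrability facts
  have e1 : (1 - q) - 1 = -q := by ring
  have e2 : (2 - q) - 1 = 1 - q := by ring
  have hint1C : IntervalIntegrable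
      (fun t : ℝ => ((t ^ (-q) * (1 - t) ^ (q - 1) : ℝ) : ℂ)) volume 0 1 := by
    have h := beta_integrableC (a := 1 - q) (b := q) (by linarith) hq0
    rwa [e1] at h
  have hint2 : IntervalIntegrable
      (fun t : ℝ => t ^ (1 - q) * (1 - t) ^ (q - 1)) volume 0 1 := by
    have h := beta_integrable (a := 2 - q) (b := q) (by linarith) hq0
    rwa [e2] at h
  have hmaps : Set.MapsTo (fun t : ℝ => z * t) (Set.uIcc 0 1) (closedBall (0 : ℂ) R) := by
    intro t ht
    rw [Set.uIcc_of_le (by norm_num : (0:ℝ) ≤ 1)] at ht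
    simp only [mem_closedBall, dist_zero_right, norm_mul, Complex.norm_real,
      Real.norm_eq_abs, _root_.abs_of_nonneg ht.1]
    calc ‖z‖ * t ≤ R * 1 := mul_le_mul hz ht.2 ht.1 hR.le
    _ = R := mul_one R
  have hFcomp : ContinuousOn (fun t : ℝ => F (z * t)) (Set.uIcc 0 1) :=
    hF_cont.comp (Continuous.continuousOn (by continuity)) hmaps
  have hintF : IntervalIntegrable
      (fun t : ℝ => ((t ^ (-q) * (1 - t) ^ (q - 1) : ℝ) : ℂ) * F (z * t)) volume 0 1 :=
    hint1C.mul_continuousOn hFcomp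
  have hintc : IntervalIntegrable
      (fun t : ℝ => ((t ^ (-q) * (1 - t) ^ (q - 1) : ℝ) : ℂ) * c) volume 0 1 :=
    hint1C.mul_const c
  -- value of the first beta integral
  have hI1 : (∫ t in (0:ℝ)..1, t ^ (-q) * (1 - t) ^ (q - 1))
      = Real.Gamma (1 - q) * Real.Gamma q := by
    have h := beta_real (a := 1 - q) (b := q) (by linarith) hq0
    rw [e1] at h
    rw [h, show (1 - q) + q = 1 by ring, Real.Gamma_one, div_one]
  have hI2 : (∫ t in (0:ℝ)..1, t ^ (1 - q) * (1 - t) ^ (q - 1))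
      = Real.Gamma (2 - q) * Real.Gamma q := by
    have h := beta_real (a := 2 - q) (b := q) (by linarith) hq0
    rw [e2] at h
    rw [h, show (2 - q) + q = 2 by ring, Real.Gamma_two, div_one]
  -- the key identity
  have hIc : (∫ t in (0:ℝ)..1, ((t ^ (-q) * (1 - t) ^ (q - 1) : ℝ) : ℂ) * c)
      = ((Real.Gamma (1 - q) * Real.Gamma q : ℝ) : ℂ) * c := by
    rw [intervalIntegral.integral_mul_const, intervalIntegral.integral_ofReal, hI1]
  have key : Tu z - b =
      (1 / (Real.Gamma q : ℂ)) *
        ∫ t in (0:ℝ)..1, ((t ^ (-q) * (1 - t) ^ (q - 1) : ℝ) : ℂ) * (F (z * t) - c) := by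
    have hsplit : (∫ t in (0:ℝ)..1,
        ((t ^ (-q) * (1 - t) ^ (q - 1) : ℝ) : ℂ) * (F (z * t) - c))
        = (∫ t in (0:ℝ)..1, ((t ^ (-q) * (1 - t) ^ (q - 1) : ℝ) : ℂ) * F (z * t))
          - ∫ t in (0:ℝ)..1, ((t ^ (-q) * (1 - t) ^ (q - 1) : ℝ) : ℂ) * c := by
      simp_rw [mul_sub]
      exact intervalIntegral.integral_sub hintF hintc
    rw [hTu z, hsplit, mul_sub, hIc]
    have hb : (1 / (Real.Gamma q : ℂ)) * (((Real.Gamma (1 - q) * Real.Gamma q : ℝ) : ℂ) * c) = b := by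
      rw [hc]
      have h1 : (Real.Gamma q : ℂ) ≠ 0 := by exact_mod_cast hΓq.ne'
      have h2 : (Real.Gamma (1 - q) : ℂ) ≠ 0 := by exact_mod_cast hΓ1q.ne'
      push_cast
      field_simp
    rw [hb]
  rw [key, norm_mul]
  have hnorm1 : ‖(1 / (Real.Gamma q : ℂ))‖ = 1 / Real.Gamma q := by
    rw [norm_div, norm_one, Complex.norm_real, Real.norm_eq_abs, abs_of_pos hΓq]
  -- pointwise bound
  have hbound : ‖∫ t in (0:ℝ)..1,
      ((t ^ (-q) * (1 - t) ^ (q - 1) : ℝ) : ℂ) * (F (z * t) - c)‖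
      ≤ |∫ t in (0:ℝ)..1, t ^ (1 - q) * (1 - t) ^ (q - 1) * (M * ‖z‖ / R)| := by
    apply intervalIntegral.norm_integral_le_abs_of_norm_le _ (hint2.mul_const _)
    rw [ae_restrict_iff' measurableSet_uIoc]
    filter_upwards with t ht
    rw [Set.uIoc_of_le (by norm_num : (0:ℝ) ≤ 1)] at ht
    obtain ⟨h0, h1⟩ := ht
    have hg0 : (0:ℝ) ≤ t ^ (-q) * (1 - t) ^ (q - 1) :=
      mul_nonneg (Real.rpow_nonneg h0.le _) (Real.rpow_nonneg (by linarith) _)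
    have hzt : ‖z * (t:ℂ)‖ = ‖z‖ * t := by
      rw [norm_mul, Complex.norm_real, Real.norm_eq_abs, abs_of_pos h0]
    have hle : ‖F (z * t) - c‖ ≤ M * (‖z‖ * t) / R := by
      have := hF_bd (z * t) (by
        rw [hzt]
        calc ‖z‖ * t ≤ R * 1 := mul_le_mul hz h1 h0.le hR.le
        _ = R := mul_one R)
      rwa [hzt] at this
    rw [norm_mul, Complex.norm_real, Real.norm_eq_abs, _root_.abs_of_nonneg hg0]
    calc (t ^ (-q) * (1 - t) ^ (q - 1)) * ‖F (z * t) - c‖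
        ≤ (t ^ (-q) * (1 - t) ^ (q - 1)) * (M * (‖z‖ * t) / R) :=
          mul_le_mul_of_nonneg_left hle hg0
      _ = (t ^ (-q) * t) * (1 - t) ^ (q - 1) * (M * ‖z‖ / R) := by ring
      _ = t ^ (1 - q) * (1 - t) ^ (q - 1) * (M * ‖z‖ / R) := by
          rw [show t ^ (-q) * t = t ^ (1 - q) by
            rw [show (1 - q) = -q + 1 by ring, Real.rpow_add h0, Real.rpow_one]]
  rw [intervalIntegral.integral_mul_const, hI2] at hbound
  have hMzR : 0 ≤ M * ‖z‖ / R := by positivity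
  rw [_root_.abs_of_nonneg (by positivity : (0:ℝ) ≤ Real.Gamma (2 - q) * Real.Gamma q * (M * ‖z‖ / R))] at hbound
  calc ‖(1 / (Real.Gamma q : ℂ))‖ * ‖∫ t in (0:ℝ)..1,
        ((t ^ (-q) * (1 - t) ^ (q - 1) : ℝ) : ℂ) * (F (z * t) - c)‖
      ≤ (1 / Real.Gamma q) * (Real.Gamma (2 - q) * Real.Gamma q * (M * ‖z‖ / R)) := by
        rw [hnorm1]
        exact mul_le_mul_of_nonneg_left hbound (by positivity)
    _ = M * Real.Gamma (2 - q) * ‖z‖ / R := by field_simp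
end
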